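/- Let φ, η, ϕ ∈ 𝒫 with φ = ϕ + η pointwise on (0,∞)². Then for any compatible pair (X₀,X₁) of quasi-Banach lattices, φ(X₀,X₁) = ϕ(X₀,X₁) + η(X₀,X₁) with equivalence of quasi-norms with constant at most 2: every x ∈ φ(X₀,X₁) with ‖x‖_{φ(X₀,X₁)} < 1 can be written x = y + z with ‖y‖_{ϕ(X₀,X₁)} ≤ 1 and ‖z‖_{η(X₀,X₁)} ≤ 1, and conversely ‖y+z‖_{φ(X₀,X₁)} ≤ 2 max(‖y‖_{ϕ(X₀,X₁)}, ‖z‖_{η(X₀,X₁)}). -/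

import Mathlib

open scoped ENNReal NNReal

/-- The Calderón–Lozanovskii quasi-norm
`‖x‖ = inf{λ > 0 : |x| ≤ λ·φ(x₀,x₁), ‖x₀‖_{X₀} ≤ 1, ‖x₁‖_{X₁} ≤ 1}` for a compatible
pair of quasi-Banach function lattices over `α` encoded by `ℝ≥0∞`-valued lattice
quasi-norms `q₀, q₁` on the ambient function space (infimum `∞` if no such `λ`). -/
noncomputable def CLnorm {α : Type*} (φ : ℝ → ℝ → ℝ) (q0 q1 : (α → ℝ) → ℝ≥0∞)
    (x : α → ℝ) : ℝ≥0∞ :=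
  ⨅ (l : ℝ≥0) (_ : ∃ x0 x1 : α → ℝ, (∀ a, 0 ≤ x0 a) ∧ (∀ a, 0 ≤ x1 a) ∧
      q0 x0 ≤ 1 ∧ q1 x1 ≤ 1 ∧ ∀ a, |x a| ≤ (l : ℝ) * φ (x0 a) (x1 a)), (l : ℝ≥0∞)

private lemma clamp_bound (x c d : ℝ) (hc : 0 ≤ c) (hd : 0 ≤ d) (h : |x| ≤ c + d) :
    |x - max (min x c) (-c)| ≤ d := by
  rw [abs_le] at h ⊢
  simp only [min_def, max_def]
  split_ifs <;> constructor <;> linarith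

/-- If `φ = ϕ + η` pointwise with `φ, ϕ, η ∈ 𝒫`, then
`φ(X₀,X₁) = ϕ(X₀,X₁) + η(X₀,X₁)` with constant at most `2`: every `x` with
`‖x‖_{φ(X₀,X₁)} < 1` decomposes as `x = y + z` with `‖y‖_{ϕ(X₀,X₁)} ≤ 1` and
`‖z‖_{η(X₀,X₁)} ≤ 1`, and conversely
`‖y+z‖_{φ(X₀,X₁)} ≤ 2·max(‖y‖_{ϕ(X₀,X₁)}, ‖z‖_{η(X₀,X₁)})`. -/
theorem stmt16 {α : Type*} (φ ϕ η : ℝ → ℝ → ℝ) (q0 q1 : (α → ℝ) → ℝ≥0∞)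
    (hq0mono : ∀ x y : α → ℝ, (∀ a, |x a| ≤ |y a|) → q0 x ≤ q0 y)
    (hq1mono : ∀ x y : α → ℝ, (∀ a, |x a| ≤ |y a|) → q1 x ≤ q1 y)
    (hq0hom : ∀ (r : ℝ≥0) (x : α → ℝ), q0 ((r : ℝ) • x) = r * q0 x)
    (hq1hom : ∀ (r : ℝ≥0) (x : α → ℝ), q1 ((r : ℝ) • x) = r * q1 x)
    (hq0add : ∀ x y : α → ℝ, q0 (x + y) ≤ q0 x + q0 y)
    (hq1add : ∀ x y : α → ℝ, q1 (x + y) ≤ q1 x + q1 y)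
    (hφnonneg : ∀ s t : ℝ, 0 ≤ s → 0 ≤ t → 0 ≤ φ s t)
    (hφhom : ∀ l s t : ℝ, 0 ≤ l → 0 ≤ s → 0 ≤ t → φ (l * s) (l * t) = l * φ s t)
    (hφmono0 : ∀ t s s' : ℝ, 0 ≤ t → 0 ≤ s → s ≤ s' → φ s t ≤ φ s' t)
    (hφmono1 : ∀ s t t' : ℝ, 0 ≤ s → 0 ≤ t → t ≤ t' → φ s t ≤ φ s t')
    (hϕnonneg : ∀ s t : ℝ, 0 ≤ s → 0 ≤ t → 0 ≤ ϕ s t)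
    (hϕhom : ∀ l s t : ℝ, 0 ≤ l → 0 ≤ s → 0 ≤ t → ϕ (l * s) (l * t) = l * ϕ s t)
    (hϕmono0 : ∀ t s s' : ℝ, 0 ≤ t → 0 ≤ s → s ≤ s' → ϕ s t ≤ ϕ s' t)
    (hϕmono1 : ∀ s t t' : ℝ, 0 ≤ s → 0 ≤ t → t ≤ t' → ϕ s t ≤ ϕ s t')
    (hηnonneg : ∀ s t : ℝ, 0 ≤ s → 0 ≤ t → 0 ≤ η s t)
    (hηhom : ∀ l s t : ℝ, 0 ≤ l → 0 ≤ s → 0 ≤ t → η (l * s) (l * t) = l * η s t)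
    (hηmono0 : ∀ t s s' : ℝ, 0 ≤ t → 0 ≤ s → s ≤ s' → η s t ≤ η s' t)
    (hηmono1 : ∀ s t t' : ℝ, 0 ≤ s → 0 ≤ t → t ≤ t' → η s t ≤ η s t')
    (hadd : ∀ s t : ℝ, 0 ≤ s → 0 ≤ t → φ s t = ϕ s t + η s t) :
    (∀ x : α → ℝ, CLnorm φ q0 q1 x < 1 →
      ∃ y z : α → ℝ, x = y + z ∧ CLnorm ϕ q0 q1 y ≤ 1 ∧ CLnorm η q0 q1 z ≤ 1) ∧
    (∀ y z : α → ℝ,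
      CLnorm φ q0 q1 (y + z) ≤ 2 * max (CLnorm ϕ q0 q1 y) (CLnorm η q0 q1 z)) := by
  constructor
  · -- decomposition
    intro x hx
    rw [CLnorm, iInf_lt_iff] at hx
    obtain ⟨l, hl⟩ := hx
    rw [iInf_lt_iff] at hl
    obtain ⟨⟨x0, x1, hx0, hx1, hq0, hq1, hle⟩, hl1⟩ := hl
    set y : α → ℝ := fun a => max (min (x a) ((l : ℝ) * ϕ (x0 a) (x1 a)))
      (-((l : ℝ) * ϕ (x0 a) (x1 a))) with hy
    refine ⟨y, x - y, by funext a; simp, ?_, ?_⟩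
    · refine le_trans ?_ hl1.le
      refine iInf_le_of_le l (iInf_le_of_le ⟨x0, x1, hx0, hx1, hq0, hq1, fun a => ?_⟩ le_rfl)
      have hc : 0 ≤ (l : ℝ) * ϕ (x0 a) (x1 a) :=
        mul_nonneg l.coe_nonneg (hϕnonneg _ _ (hx0 a) (hx1 a))
      rw [hy]
      rw [abs_le]
      constructor
      · exact le_max_right _ _
      · exact max_le (min_le_right _ _) (by linarith)
    · refine le_trans ?_ hl1.le
      refine iInf_le_of_le l (iInf_le_of_le ⟨x0, x1, hx0, hx1, hq0, hq1, fun a => ?_⟩ le_rfl)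
      have hc : 0 ≤ (l : ℝ) * ϕ (x0 a) (x1 a) :=
        mul_nonneg l.coe_nonneg (hϕnonneg _ _ (hx0 a) (hx1 a))
      have hd : 0 ≤ (l : ℝ) * η (x0 a) (x1 a) :=
        mul_nonneg l.coe_nonneg (hηnonneg _ _ (hx0 a) (hx1 a))
      have h := hle a
      rw [hadd _ _ (hx0 a) (hx1 a), mul_add] at h
      simpa [hy] using clamp_bound (x a) _ _ hc hd h
  · -- quasi-triangle
    intro y z
    set A := CLnorm ϕ q0 q1 y with hA
    set B := CLnorm η q0 q1 z with hB
    rcases eq_or_ne A ∞ with hAt | hAt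
    · simp [hAt]
    rcases eq_or_ne B ∞ with hBt | hBt
    · simp [hBt]
    apply ENNReal.le_of_forall_pos_le_add
    intro ε hε _
    have hε2 : (ε : ℝ≥0∞) / 2 ≠ 0 := by
      simp [ENNReal.div_eq_zero_iff, hε.ne']
    have hAlt : A < A + ε / 2 := ENNReal.lt_add_right hAt hε2
    have hBlt : B < B + ε / 2 := ENNReal.lt_add_right hBt hε2
    rw [hA, CLnorm, iInf_lt_iff] at hAlt
    obtain ⟨l0, hl0⟩ := hAlt
    rw [iInf_lt_iff] at hl0
    obtain ⟨⟨u0, u1, hu0, hu1, hqu0, hqu1, hley⟩, hl0lt⟩ := hl0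
    rw [hB, CLnorm, iInf_lt_iff] at hBlt
    obtain ⟨l1, hl1⟩ := hBlt
    rw [iInf_lt_iff] at hl1
    obtain ⟨⟨v0, v1, hv0, hv1, hqv0, hqv1, hlez⟩, hl1lt⟩ := hl1
    set m : ℝ≥0 := max l0 l1 with hm
    have key : CLnorm φ q0 q1 (y + z) ≤ ((2 * m : ℝ≥0) : ℝ≥0∞) := by
      refine iInf_le_of_le (2 * m) (iInf_le_of_le ?_ le_rfl)
      refine ⟨fun a => (u0 a + v0 a) / 2, fun a => (u1 a + v1 a) / 2,
        fun a => by have := hu0 a; have := hv0 a; linarith,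
        fun a => by have := hu1 a; have := hv1 a; linarith, ?_, ?_, ?_⟩
      · have he : (fun a => (u0 a + v0 a) / 2) = ((((2:ℝ≥0)⁻¹ : ℝ≥0) : ℝ) • (u0 + v0)) := by
          funext a; simp [Pi.add_apply]; ring
        have h2 : ((2⁻¹ : ℝ≥0) : ℝ≥0∞) = (2:ℝ≥0∞)⁻¹ := by
          rw [ENNReal.coe_inv (by norm_num), ENNReal.coe_ofNat]
        rw [he, hq0hom, h2]
        calc (2:ℝ≥0∞)⁻¹ * q0 (u0 + v0) ≤ (2:ℝ≥0∞)⁻¹ * (q0 u0 + q0 v0) :=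
              mul_le_mul_right (hq0add u0 v0) _
          _ ≤ (2:ℝ≥0∞)⁻¹ * (1 + 1) := mul_le_mul_right (add_le_add hqu0 hqv0) _
          _ = 1 := by
              rw [(by norm_num : (1:ℝ≥0∞) + 1 = 2)]
              exact ENNReal.inv_mul_cancel (by norm_num) (by norm_num)
      · have he : (fun a => (u1 a + v1 a) / 2) = ((((2:ℝ≥0)⁻¹ : ℝ≥0) : ℝ) • (u1 + v1)) := by
          funext a; simp [Pi.add_apply]; ring
        have h2 : ((2⁻¹ : ℝ≥0) : ℝ≥0∞) = (2:ℝ≥0∞)⁻¹ := by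
          rw [ENNReal.coe_inv (by norm_num), ENNReal.coe_ofNat]
        rw [he, hq1hom, h2]
        calc (2:ℝ≥0∞)⁻¹ * q1 (u1 + v1) ≤ (2:ℝ≥0∞)⁻¹ * (q1 u1 + q1 v1) :=
              mul_le_mul_right (hq1add u1 v1) _
          _ ≤ (2:ℝ≥0∞)⁻¹ * (1 + 1) := mul_le_mul_right (add_le_add hqu1 hqv1) _
          _ = 1 := by
              rw [(by norm_num : (1:ℝ≥0∞) + 1 = 2)]
              exact ENNReal.inv_mul_cancel (by norm_num) (by norm_num)
      · intro a
        have p0 := hu0 a; have p1 := hu1 a; have p2 := hv0 a; have p3 := hv1 a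
        have h1 : |y a + z a| ≤ |y a| + |z a| := abs_add_le _ _
        have h2 : |y a| ≤ (m : ℝ) * ϕ (u0 a) (u1 a) := by
          refine le_trans (hley a) (mul_le_mul_of_nonneg_right ?_
            (hϕnonneg _ _ (hu0 a) (hu1 a)))
          exact_mod_cast le_max_left l0 l1
        have h3 : |z a| ≤ (m : ℝ) * η (v0 a) (v1 a) := by
          refine le_trans (hlez a) (mul_le_mul_of_nonneg_right ?_
            (hηnonneg _ _ (hv0 a) (hv1 a)))
          exact_mod_cast le_max_right l0 l1
        have hw0 : u0 a / 2 ≤ (u0 a + v0 a) / 2 := by linarith [hv0 a]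
        have hw1 : u1 a / 2 ≤ (u1 a + v1 a) / 2 := by linarith [hv1 a]
        have hw0' : v0 a / 2 ≤ (u0 a + v0 a) / 2 := by linarith [hu0 a]
        have hw1' : v1 a / 2 ≤ (u1 a + v1 a) / 2 := by linarith [hu1 a]
        have hϕw : (1/2 : ℝ) * ϕ (u0 a) (u1 a) ≤ ϕ ((u0 a + v0 a)/2) ((u1 a + v1 a)/2) := by
          have := hϕhom (1/2) (u0 a) (u1 a) (by norm_num) (hu0 a) (hu1 a)
          calc (1/2 : ℝ) * ϕ (u0 a) (u1 a) = ϕ (u0 a / 2) (u1 a / 2) := by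
                rw [← this]; ring_nf
            _ ≤ ϕ ((u0 a + v0 a)/2) (u1 a / 2) :=
                hϕmono0 _ _ _ (by linarith) (by linarith) hw0
            _ ≤ _ := hϕmono1 _ _ _ (by linarith) (by linarith) hw1
        have hηw : (1/2 : ℝ) * η (v0 a) (v1 a) ≤ η ((u0 a + v0 a)/2) ((u1 a + v1 a)/2) := by
          have := hηhom (1/2) (v0 a) (v1 a) (by norm_num) (hv0 a) (hv1 a)
          calc (1/2 : ℝ) * η (v0 a) (v1 a) = η (v0 a / 2) (v1 a / 2) := by
                rw [← this]; ring_nf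
            _ ≤ η ((u0 a + v0 a)/2) (v1 a / 2) :=
                hηmono0 _ _ _ (by linarith) (by linarith) hw0'
            _ ≤ _ := hηmono1 _ _ _ (by linarith) (by linarith) hw1'
        have hφw : φ ((u0 a + v0 a)/2) ((u1 a + v1 a)/2)
            = ϕ ((u0 a + v0 a)/2) ((u1 a + v1 a)/2) + η ((u0 a + v0 a)/2) ((u1 a + v1 a)/2) :=
          hadd _ _ (by linarith) (by linarith)
        have hcast : ((2 * m : ℝ≥0) : ℝ) = 2 * (m : ℝ) := by push_cast; ring
        rw [hcast, hφw]
        have hmn : (0:ℝ) ≤ (m:ℝ) := m.coe_nonneg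
        have h4 := mul_le_mul_of_nonneg_left hϕw (by linarith : (0:ℝ) ≤ 2 * (m:ℝ))
        have h5 := mul_le_mul_of_nonneg_left hηw (by linarith : (0:ℝ) ≤ 2 * (m:ℝ))
        simp only [Pi.add_apply]
        nlinarith [h1, h2, h3, h4, h5]
    refine key.trans ?_
    have hcast : ((2 * m : ℝ≥0) : ℝ≥0∞) = 2 * max ((l0 : ℝ≥0∞)) ((l1 : ℝ≥0∞)) := by
      push_cast [hm]
      rfl
    rw [hcast]
    have : max ((l0 : ℝ≥0∞)) ((l1 : ℝ≥0∞)) ≤ max A B + ε / 2 :=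
      max_le (hl0lt.le.trans (add_le_add_left (le_max_left _ _) _))
        (hl1lt.le.trans (add_le_add_left (le_max_right _ _) _))
    calc 2 * max ((l0 : ℝ≥0∞)) ((l1 : ℝ≥0∞)) ≤ 2 * (max A B + ε / 2) :=
          mul_le_mul_right this 2
      _ = 2 * max A B + 2 * (ε / 2) := by rw [mul_add]
      _ = 2 * max A B + ε := by
          rw [ENNReal.mul_div_cancel' (by norm_num) (by norm_num)]
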